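/- Let q be a prime power. For every field extension E of the rational function field 𝔽_q(t), the ring E ⊗_{𝔽_q(t)} 𝔽_q((t)) is reduced (has no nonzero nilpotent elements). In other words, the Laurent series field 𝔽_q((t)) is a separable field extension of 𝔽_q(t). -/

import Mathlib

open scoped RatFunc

open Polynomial HahnSeries

section Aux

variable {p : ℕ} [Fact p.Prime]

/-- Every polynomial over a perfect field of characteristic `p` decomposes as
`∑_{j<p} X^j * (Q j)^p`. -/
theorem aux_poly_decomp {K : Type*} [Field K] [CharP K p] [PerfectRing K p] (P : K[X]) :
    ∃ Q : Fin p → K[X], P = ∑ j : Fin p, X ^ (j : ℕ) * Q j ^ p := by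
  have hp : p.Prime := Fact.out
  have hp0 : 0 < p := hp.pos
  haveI : CharP K[X] p := charP_of_injective_ringHom (C_injective (R := K)) p
  induction P using Polynomial.induction_on' with
  | add f g hf hg =>
    obtain ⟨Qf, hQf⟩ := hf
    obtain ⟨Qg, hQg⟩ := hg
    refine ⟨Qf + Qg, ?_⟩
    rw [hQf, hQg, ← Finset.sum_add_distrib]
    refine Finset.sum_congr rfl fun j _ => ?_
    rw [Pi.add_apply, add_pow_char, mul_add]
  | monomial n a =>
    set b : K := (frobeniusEquiv K p).symm a with hb
    refine ⟨fun j => if j = (⟨n % p, Nat.mod_lt _ hp0⟩ : Fin p) then Polynomial.C b * X ^ (n / p)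
      else 0, ?_⟩
    have : ∀ j : Fin p,
        X ^ (j : ℕ) * (if j = (⟨n % p, Nat.mod_lt _ hp0⟩ : Fin p) then Polynomial.C b * X ^ (n / p)
          else 0) ^ p
        = if j = (⟨n % p, Nat.mod_lt _ hp0⟩ : Fin p) then
            X ^ (j : ℕ) * (Polynomial.C b * X ^ (n / p)) ^ p else 0 := by
      intro j
      split
      · rfl
      · rw [zero_pow hp0.ne', mul_zero]
    rw [Finset.sum_congr rfl fun j _ => this j, Finset.sum_ite_eq' Finset.univ
      (⟨n % p, Nat.mod_lt _ hp0⟩ : Fin p), if_pos (Finset.mem_univ _)]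
    have hbp : b ^ p = a := frobeniusEquiv_symm_pow_p K p a
    calc (monomial n a : K[X]) = Polynomial.C a * X ^ n := (C_mul_X_pow_eq_monomial).symm
      _ = Polynomial.C a * X ^ (n % p + n / p * p) := by rw [Nat.mod_add_div']
      _ = X ^ (n % p) * (Polynomial.C (b ^ p) * X ^ (n / p * p)) := by rw [hbp, _root_.pow_add]; ring
      _ = X ^ (n % p) * (Polynomial.C b * X ^ (n / p)) ^ p := by rw [mul_pow, ← C_pow, ← pow_mul]

/-- If `∑_{j<p} t^j g_j^p = 0` in `K((t))` then all `g_j = 0`. -/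
theorem aux_hahn {K : Type*} [Field K] (g : Fin p → LaurentSeries K)
    (h : ∑ j : Fin p, (single ((j : ℕ) : ℤ) 1 : LaurentSeries K) * g j ^ p = 0) :
    ∀ j, g j = 0 := by
  have hp : p.Prime := Fact.out
  intro j
  by_contra hj
  classical
  set v : Fin p → LaurentSeries K := fun i => (single ((i : ℕ) : ℤ) 1) * g i ^ p with hv
  set T : Finset (Fin p) := Finset.univ.filter (fun i => g i ≠ 0) with hT
  have hjT : j ∈ T := Finset.mem_filter.mpr ⟨Finset.mem_univ _, hj⟩
  have hterm : ∀ i ∈ T, v i ≠ 0 := by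
    intro i hi
    have hgi : g i ≠ 0 := (Finset.mem_filter.mp hi).2
    exact mul_ne_zero (single_ne_zero one_ne_zero) (pow_ne_zero _ hgi)
  have horder : ∀ i ∈ T, (v i).order = (i : ℕ) + p * (g i).order := by
    intro i hi
    have hgi : g i ≠ 0 := (Finset.mem_filter.mp hi).2
    rw [hv, order_mul (single_ne_zero one_ne_zero) (pow_ne_zero _ hgi),
      order_single one_ne_zero, order_pow, nsmul_eq_mul]
  obtain ⟨i₀, hi₀T, hmin⟩ := T.exists_min_image (fun i => (v i).order) ⟨j, hjT⟩
  set n : ℤ := (v i₀).order with hn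
  have hvanish : ∀ i ∈ (Finset.univ : Finset (Fin p)), i ≠ i₀ → (v i).coeff n = 0 := by
    intro i _ hne
    by_cases hiT : i ∈ T
    · have hlt : n < (v i).order := by
        rcases lt_or_eq_of_le (hmin i hiT) with h' | h'
        · exact h'
        · exfalso
          have he : ((i₀ : ℕ) : ℤ) + p * (g i₀).order = ((i : ℕ) : ℤ) + p * (g i).order := by
            rw [← horder i₀ hi₀T, ← horder i hiT, ← h']
          have hdvd : (p : ℤ) ∣ ((i : ℕ) : ℤ) - ((i₀ : ℕ) : ℤ) :=
            ⟨(g i₀).order - (g i).order, by linarith [he]⟩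
          have habs : |((i : ℕ) : ℤ) - ((i₀ : ℕ) : ℤ)| < p := by
            have h1 : ((i : ℕ) : ℤ) < p := by exact_mod_cast i.2
            have h2 : ((i₀ : ℕ) : ℤ) < p := by exact_mod_cast i₀.2
            have h3 : 0 ≤ ((i : ℕ) : ℤ) := Int.natCast_nonneg _
            have h4 : 0 ≤ ((i₀ : ℕ) : ℤ) := Int.natCast_nonneg _
            rw [abs_lt]; constructor <;> linarith
          have := Int.eq_zero_of_abs_lt_dvd hdvd habs
          have : ((i : ℕ) : ℤ) = ((i₀ : ℕ) : ℤ) := by linarith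
          exact hne (Fin.ext (by exact_mod_cast this))
      exact coeff_eq_zero_of_lt_order hlt
    · have hgi : g i = 0 := by
        by_contra h'
        exact hiT (Finset.mem_filter.mpr ⟨Finset.mem_univ _, h'⟩)
      simp [hv, hgi, zero_pow hp.pos.ne']
  have hsum := map_sum (coeff.addMonoidHom n) v Finset.univ
  simp only [coeff.addMonoidHom_apply] at hsum
  rw [Finset.sum_eq_single_of_mem i₀ (Finset.mem_univ _) hvanish, h] at hsum
  have hne : (v i₀).coeff n ≠ 0 := fun h0 => hterm i₀ hi₀T (coeff_order_eq_zero.mp h0)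
  exact hne (by simpa using hsum.symm)

/-- Linear independence is preserved under base change of fields. -/
theorem aux_baseChange {F E V ι : Type*} [Field F] [Field E] [Algebra F E]
    [AddCommGroup V] [Module F V] {v : ι → V} (hv : LinearIndependent F v) :
    LinearIndependent E (fun i => (1 : E) ⊗ₜ[F] v i) := by
  classical
  have hr := (linearIndepOn_id_range_iff hv.injective).mpr hv
  set c := Module.Basis.extend hr with hc
  set B := c.baseChange E with hB
  rw [linearIndependent_iff']
  intro s g hrel i hi
  have hmem : ∀ i' : ι, v i' ∈ hr.extend (Set.subset_univ _) :=
    fun i' => hr.subset_extend _ ⟨i', rfl⟩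
  have happ := congrArg (fun z => B.repr z ⟨v i, hmem i⟩) hrel
  simp only [map_sum, map_smul, map_zero] at happ
  rw [Finsupp.coe_zero, Pi.zero_apply, Finset.sum_apply'] at happ
  have hterm : ∀ i' ∈ s, (g i' • B.repr ((1 : E) ⊗ₜ[F] v i')) ⟨v i, hmem i⟩
      = if i' = i then g i' else 0 := by
    intro i' _
    rw [Finsupp.smul_apply, Module.Basis.baseChange_repr_tmul]
    have hv' : v i' = c ⟨v i', hmem i'⟩ := (Module.Basis.extend_apply_self hr ⟨v i', hmem i'⟩).symm
    rw [hv', Module.Basis.repr_self, Finsupp.single_apply]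
    by_cases hii : i' = i
    · subst hii
      simp
    · have : (⟨v i', hmem i'⟩ : hr.extend (Set.subset_univ _)) ≠ ⟨v i, hmem i⟩ := by
        intro hcontra
        exact hii (hv.injective (by simpa [Subtype.ext_iff] using hcontra))
      simp [this, hii]
  rw [Finset.sum_congr rfl hterm, Finset.sum_ite_eq' s i, if_pos hi] at happ
  exact happ

/-- p-th powers of linearly independent Laurent series are linearly independent. -/
theorem aux_pow_li {K : Type*} [Field K] [CharP K p] [PerfectRing K p] {ι : Type*}
    {f : ι → LaurentSeries K} (hf : LinearIndependent (RatFunc K) f) :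
    LinearIndependent (RatFunc K) fun i => f i ^ p := by
  classical
  have hp : p.Prime := Fact.out
  haveI : CharP (LaurentSeries K) p :=
    charP_of_injective_ringHom (HahnSeries.C_injective (R := K)) p
  haveI : CharP K[X] p := charP_of_injective_ringHom (Polynomial.C_injective (R := K)) p
  rw [linearIndependent_iff'] at hf ⊢
  intro s g hrel i hi
  -- clear denominators
  obtain ⟨b, hb⟩ := IsLocalization.exist_integer_multiples (nonZeroDivisors K[X]) s g
  have hbex : ∀ i', ∃ q : K[X], i' ∈ s →
      algebraMap K[X] (RatFunc K) q = (b : K[X]) • g i' := by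
    intro i'
    by_cases hi' : i' ∈ s
    · obtain ⟨q, hq⟩ := hb i' hi'
      exact ⟨q, fun _ => hq⟩
    · exact ⟨0, fun h => absurd h hi'⟩
  choose c hc using hbex
  set P : ι → K[X] := fun i' => (b : K[X]) ^ (p - 1) * c i' with hP
  have hbne : (b : K[X]) ≠ 0 := nonZeroDivisors.coe_ne_zero b
  have hPmap : ∀ i' ∈ s, algebraMap K[X] (RatFunc K) (P i')
      = (algebraMap K[X] (RatFunc K) (b : K[X])) ^ p * g i' := by
    intro i' hi'
    rw [hP, map_mul, map_pow, hc i' hi', Algebra.smul_def, ← mul_assoc, ← pow_succ,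
      Nat.sub_add_cancel hp.one_le]
  -- the relation with polynomial coefficients
  have hrel2 : ∑ i' ∈ s, algebraMap K[X] (LaurentSeries K) (P i') * f i' ^ p = 0 := by
    have : ∀ i' ∈ s, algebraMap K[X] (LaurentSeries K) (P i') * f i' ^ p
        = (algebraMap (RatFunc K) (LaurentSeries K)
            (algebraMap K[X] (RatFunc K) (b : K[X]))) ^ p * (g i' • f i' ^ p) := by
      intro i' hi'
      rw [IsScalarTower.algebraMap_apply K[X] (RatFunc K) (LaurentSeries K), hPmap i' hi',
        map_mul, map_pow, Algebra.smul_def, mul_assoc]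
    rw [Finset.sum_congr rfl this, ← Finset.mul_sum, hrel, mul_zero]
  -- decompose the polynomials
  have hdecomp : ∀ i', ∃ Q : Fin p → K[X], P i' = ∑ j : Fin p, X ^ (j : ℕ) * Q j ^ p :=
    fun i' => aux_poly_decomp (P i')
  choose Q hQ using hdecomp
  set G : Fin p → LaurentSeries K := fun j =>
    ∑ i' ∈ s, algebraMap K[X] (LaurentSeries K) (Q i' j) * f i' with hG
  have hGapp : ∀ j, G j = ∑ i' ∈ s, algebraMap K[X] (LaurentSeries K) (Q i' j) * f i' :=
    fun _ => rfl
  have hXmap : algebraMap K[X] (LaurentSeries K) X = single (1 : ℤ) 1 := by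
    rw [IsScalarTower.algebraMap_apply K[X] (RatFunc K) (LaurentSeries K),
      RatFunc.algebraMap_X]
    exact RatFunc.coe_X
  have hkey : ∑ j : Fin p, (single ((j : ℕ) : ℤ) 1 : LaurentSeries K) * G j ^ p = 0 := by
    have h1 : ∀ j : Fin p, (single ((j : ℕ) : ℤ) 1 : LaurentSeries K) * G j ^ p
        = ∑ i' ∈ s, algebraMap K[X] (LaurentSeries K) (X ^ (j : ℕ) * Q i' j ^ p)
            * f i' ^ p := by
      intro j
      rw [hGapp j, sum_pow_char, Finset.mul_sum]
      refine Finset.sum_congr rfl fun i' _ => ?_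
      rw [mul_pow, map_mul, map_pow, map_pow, hXmap, ← RatFunc.single_one_eq_pow, mul_assoc]
    rw [Finset.sum_congr rfl fun j _ => h1 j, Finset.sum_comm]
    rw [← hrel2]
    refine Finset.sum_congr rfl fun i' _ => ?_
    rw [← Finset.sum_mul, ← map_sum, ← hQ i']
  have hGzero := aux_hahn G hkey
  -- deduce the Q's vanish
  have hQzero : ∀ i' ∈ s, ∀ j : Fin p, Q i' j = 0 := by
    intro i' hi' j
    have hGj : ∑ i'' ∈ s, algebraMap K[X] (RatFunc K) (Q i'' j) • f i'' = 0 := by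
      have : ∀ i'' ∈ s, algebraMap K[X] (RatFunc K) (Q i'' j) • f i''
          = algebraMap K[X] (LaurentSeries K) (Q i'' j) * f i'' := by
        intro i'' _
        rw [Algebra.smul_def, IsScalarTower.algebraMap_apply K[X] (RatFunc K) (LaurentSeries K)]
      rw [Finset.sum_congr rfl this, ← hGapp j, hGzero j]
    have := hf s (fun i'' => algebraMap K[X] (RatFunc K) (Q i'' j)) hGj i' hi'
    exact (map_eq_zero_iff _ (RatFunc.algebraMap_injective K)).mp this
  have hPzero : P i = 0 := by
    rw [hQ i]
    refine Finset.sum_eq_zero fun j _ => ?_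
    rw [hQzero i hi j, zero_pow hp.pos.ne', mul_zero]
  -- conclude
  have : (algebraMap K[X] (RatFunc K) (b : K[X])) ^ p * g i = 0 := by
    rw [← hPmap i hi, hPzero, map_zero]
  have hbF : algebraMap K[X] (RatFunc K) (b : K[X]) ≠ 0 :=
    fun h => hbne ((map_eq_zero_iff _ (RatFunc.algebraMap_injective K)).mp h)
  exact (mul_eq_zero.mp this).resolve_left (pow_ne_zero _ hbF) 

end Aux

set_option maxHeartbeats 1000000 in
/-- **`𝔽_q((t))` is a separable field extension of `𝔽_q(t)`.**
Let `q` be a prime power and `K` the finite field with `q` elements.  For every field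
extension `E` of the rational function field `K(t)`, the ring `E ⊗_{K(t)} K((t))` is
reduced. -/
theorem stmt7 (p : ℕ) [Fact p.Prime] (e : ℕ) (he : 1 ≤ e)
    {K : Type*} [Field K] [Fintype K] (hK : Fintype.card K = p ^ e)
    (E : Type*) [Field E] [Algebra (RatFunc K) E] :
    IsReduced (TensorProduct (RatFunc K) E (LaurentSeries K)) := by
  classical
  have hp : p.Prime := Fact.out
  -- `K` has characteristic `p`
  haveI : CharP K (ringChar K) := ringChar.charP K
  have hrprime : (ringChar K).Prime := CharP.char_is_prime K _
  have hpr : p = ringChar K := by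
    obtain ⟨n, hn, hcard⟩ := FiniteField.card K (ringChar K)
    have hdvd : p ∣ (ringChar K) ^ (n : ℕ) := by
      rw [← hcard, hK]
      exact dvd_pow_self p (by omega)
    exact ((Nat.prime_dvd_prime_iff_eq hp hrprime).mp (hp.dvd_of_dvd_pow hdvd))
  haveI : CharP K p := hpr ▸ ringChar.charP K
  haveI : PerfectRing K p := inferInstance
  haveI : CharP (LaurentSeries K) p :=
    charP_of_injective_ringHom (HahnSeries.C_injective (R := K)) p
  haveI : CharP K[X] p := charP_of_injective_ringHom (Polynomial.C_injective (R := K)) p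
  haveI : CharP (RatFunc K) p :=
    charP_of_injective_algebraMap (RatFunc.algebraMap_injective K) p
  -- basis of `K((t))` over `K(t)` and its base change
  set F := RatFunc K
  set L := LaurentSeries K
  set b := Module.Basis.ofVectorSpace F L with hbdef
  set B := b.baseChange E with hBdef
  haveI : Nontrivial (TensorProduct F E L) := by
    obtain ⟨i₀⟩ := b.index_nonempty
    exact nontrivial_of_ne (B i₀) 0 (B.ne_zero i₀)
  haveI : CharP (TensorProduct F E L) p :=
    charP_of_injective_ringHom (algebraMap F (TensorProduct F E L)).injective p
  haveI : ExpChar (TensorProduct F E L) p := ExpChar.prime hp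
  -- Frobenius is injective on the tensor product
  have key : ∀ x : TensorProduct F E L, x ^ p = 0 → x = 0 := by
    intro x hx
    set s := (B.repr x).support with hs
    have hx' : x = ∑ i ∈ s, (B.repr x i) ⊗ₜ[F] (b i) := by
      conv_lhs => rw [← B.linearCombination_repr x]
      rw [Finsupp.linearCombination_apply, Finsupp.sum]
      refine Finset.sum_congr rfl fun i _ => ?_
      rw [hBdef, Module.Basis.baseChange_apply, TensorProduct.smul_tmul', smul_eq_mul, mul_one]
    have hxp : ∑ i ∈ s, ((B.repr x i) ^ p) ⊗ₜ[F] ((b i) ^ p) = 0 := by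
      calc ∑ i ∈ s, ((B.repr x i) ^ p) ⊗ₜ[F] ((b i) ^ p)
          = (∑ i ∈ s, (B.repr x i) ⊗ₜ[F] (b i)) ^ p := by
            refine ((sum_pow_char p s fun i => (B.repr x) i ⊗ₜ[F] b i).trans ?_).symm
            exact Finset.sum_congr rfl fun i _ => Algebra.TensorProduct.tmul_pow _ _ _
        _ = x ^ p := by rw [← hx']
        _ = 0 := hx
    have hw : LinearIndependent F (fun i => (b i) ^ p) :=
      aux_pow_li b.linearIndependent
    have h1 : LinearIndependent E (fun i => (1 : E) ⊗ₜ[F] ((b i) ^ p)) := aux_baseChange hw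
    rw [linearIndependent_iff'] at h1
    have hcoords : ∀ i ∈ s, (B.repr x i) ^ p = 0 := by
      refine h1 s (fun i => (B.repr x i) ^ p) ?_
      rw [← hxp]
      refine Finset.sum_congr rfl fun i _ => ?_
      rw [TensorProduct.smul_tmul', smul_eq_mul, mul_one]
    have hzero : ∀ i, B.repr x i = 0 := by
      intro i
      by_cases hi : i ∈ s
      · exact pow_eq_zero_iff hp.pos.ne' |>.mp (hcoords i hi)
      · exact Finsupp.notMem_support_iff.mp hi
    have : B.repr x = 0 := Finsupp.ext hzero
    simpa using congrArg B.repr.symm this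
  have frob_iter : ∀ (k : ℕ) (y : TensorProduct F E L), y ^ p ^ k = 0 → y = 0 := by
    intro k
    induction k with
    | zero => intro y hy; simpa using hy
    | succ m ih =>
      intro y hy
      apply ih
      apply key
      rw [← pow_mul, ← pow_succ]
      exact hy
  constructor
  intro x hx
  obtain ⟨n, hn⟩ := hx
  have hle : n ≤ p ^ n := Nat.le_of_lt (Nat.lt_pow_self (n := n) hp.one_lt)
  refine frob_iter n x ?_
  calc x ^ p ^ n = x ^ n * x ^ (p ^ n - n) := by rw [← _root_.pow_add, Nat.add_sub_cancel' hle]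
    _ = 0 := by rw [hn, zero_mul]
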